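/- Let K, L be Euclidean balls with centers O_K, O_L and radii r_K, r_L contained in the interior of rB^d. Let z be a point of rS^{d-1} lying on the line through O_K and O_L. If r_L < r_K and the distance from z to O_L is at least the distance from z to O_K, then the spherical projection L_z is a proper subset of K_z; in particular K_z and L_z are not congruent. -/

import Mathlib

open Metric Set
open scoped RealInnerProductSpace

/-- The spherical projection of a set `M` from a point `z` on the sphere of radius `r`:
all points `x` of the sphere such that the segment `xz` meets `M`. -/
def sphProj {d : ℕ} (r : ℝ) (M : Set (EuclideanSpace ℝ (Fin d)))
    (z : EuclideanSpace ℝ (Fin d)) : Set (EuclideanSpace ℝ (Fin d)) :=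
  {x | ‖x‖ = r ∧ (segment ℝ x z ∩ M).Nonempty}

/-- An isometric self-map of a compact set onto a subset of itself is in fact onto. -/
lemma isometry_image_self_of_compact {α : Type*} [MetricSpace α] {A : Set α}
    (hA : IsCompact A) {f : α → α} (hf : Isometry f) (hm : f '' A ⊆ A) :
    f '' A = A := by
  refine Subset.antisymm hm fun x hx => ?_
  have hcl : IsClosed (f '' A) := (hA.image hf.continuous).isClosed
  rw [← hcl.closure_eq, Metric.mem_closure_iff]
  intro ε hε
  have hiso : ∀ m : ℕ, Isometry (f^[m]) := by
    intro m
    induction m with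
    | zero => simpa using isometry_id
    | succ m ih => rw [Function.iterate_succ]; exact ih.comp hf
  have horb : ∀ n, f^[n] x ∈ A := by
    intro n
    induction n with
    | zero => simpa using hx
    | succ n ih =>
        rw [Function.iterate_succ_apply']
        exact hm ⟨_, ih, rfl⟩
  obtain ⟨l, -, ψ, hψ, hconv⟩ := hA.tendsto_subseq horb
  obtain ⟨N, hN⟩ := Metric.tendsto_atTop.mp hconv (ε / 2) (by linarith)
  have h1 := hN N le_rfl
  have h2 := hN (N + 1) (Nat.le_succ N)
  have hlt : ψ N < ψ (N + 1) := hψ (Nat.lt_succ_self N)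
  set k := ψ (N + 1) - ψ N with hk
  have hk1 : 1 ≤ k := by omega
  have hadd : ψ N + k = ψ (N + 1) := by omega
  have hiter : f^[ψ (N+1)] x = f^[ψ N] (f^[k] x) := by
    rw [← hadd, Function.iterate_add_apply]
  have hdd : dist x (f^[k] x) < ε := by
    have e1 : dist (f^[ψ N] x) (f^[ψ N] (f^[k] x)) = dist x (f^[k] x) :=
      (hiso (ψ N)).dist_eq _ _
    have e2 : dist (f^[ψ N] x) (f^[ψ (N+1)] x) < ε := by
      calc dist (f^[ψ N] x) (f^[ψ (N+1)] x)
          ≤ dist (f^[ψ N] x) l + dist (f^[ψ (N+1)] x) l := dist_triangle_right _ _ _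
        _ < ε := by
            have := h1; have := h2
            simp only [Function.comp_apply] at *
            linarith
    rw [hiter] at e2
    rwa [e1] at e2
  obtain ⟨m, hm⟩ : ∃ m, k = m + 1 := ⟨k - 1, by omega⟩
  refine ⟨f^[k] x, ?_, hdd⟩
  rw [hm, Function.iterate_succ_apply']
  exact ⟨_, horb m, rfl⟩


section Aux

variable {F : Type*} [NormedAddCommGroup F] [InnerProductSpace ℝ F]

lemma aux_norm_add_smul (z u : F) (t : ℝ) :
    ‖z + t • u‖ ^ 2 = ‖z‖ ^ 2 + 2 * t * ⟪z, u⟫ + t ^ 2 * ‖u‖ ^ 2 := by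
  rw [norm_add_sq_real, real_inner_smul_right, norm_smul, Real.norm_eq_abs,
    mul_pow, sq_abs]
  ring

lemma aux_norm_smul_sub_smul (u w : F) (s c : ℝ) :
    ‖s • u - c • w‖ ^ 2
      = s ^ 2 * ‖u‖ ^ 2 - 2 * (s * c) * ⟪u, w⟫ + c ^ 2 * ‖w‖ ^ 2 := by
  rw [norm_sub_sq_real, real_inner_smul_left, real_inner_smul_right,
    norm_smul, norm_smul, Real.norm_eq_abs, Real.norm_eq_abs,
    mul_pow, mul_pow, sq_abs, sq_abs]
  ring

lemma aux_unit_norm {w e : F} {h k a : ℝ} (hh : 0 < h) (hw : ‖w‖ = h)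
    (he : ‖e‖ = 1) (hwe : ⟪w, e⟫ = 0) (ha : a ^ 2 = h ^ 2 - k ^ 2) :
    ‖(a / h ^ 2) • w + (k / h) • e‖ = 1 := by
  have hsq : ‖(a / h ^ 2) • w + (k / h) • e‖ ^ 2 = 1 := by
    rw [norm_add_sq_real, real_inner_smul_left, real_inner_smul_right, hwe,
      norm_smul, norm_smul, Real.norm_eq_abs, Real.norm_eq_abs,
      mul_pow, mul_pow, sq_abs, sq_abs, he, hw]
    field_simp
    nlinarith only [ha, hh]
  exact (pow_left_inj₀ (norm_nonneg _) zero_le_one two_ne_zero).mp (by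
    rw [hsq]; norm_num)

lemma aux_inner_unit {w e : F} {h k a : ℝ} (hh : 0 < h) (hw : ‖w‖ = h)
    (hew : ⟪e, w⟫ = 0) :
    ⟪(a / h ^ 2) • w + (k / h) • e, w⟫ = a := by
  rw [inner_add_left, real_inner_smul_left, real_inner_smul_left,
    real_inner_self_eq_norm_sq, hw, hew]
  field_simp
  ring

end Aux

section Vid

variable {V : Type*} [AddCommGroup V] [Module ℝ V]

lemma aux_vid1 (x z w : V) (θ c : ℝ) (hc : c ≠ 0) :
    x + (1 - c⁻¹ * (1 - θ)) • (z - x) - (z + w)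
      = c⁻¹ • (x + θ • (z - x) - (z + c • w)) := by
  match_scalars <;> (field_simp; try ring)

lemma aux_vid2 (z u : V) (t0 a : ℝ) (ht0 : t0 ≠ 0) :
    (z + t0 • u) + (1 - a / t0) • (z - (z + t0 • u)) = z + a • u := by
  have h1 : (z + t0 • u) + (1 - a / t0) • (z - (z + t0 • u))
      = z + ((1 - (1 - a / t0)) * t0) • u := by
    match_scalars <;> ring
  rw [h1]
  congr 2
  field_simp
  ring

lemma aux_vid3 (z u : V) (t0 θ : ℝ) :
    (z + t0 • u) + θ • (z - (z + t0 • u)) = z + ((1 - θ) * t0) • u := by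
  match_scalars <;> ring

end Vid

set_option maxHeartbeats 4000000 in
theorem stmt2 (d : ℕ) (hd : 2 ≤ d) (r : ℝ) (hr : 0 < r)
    (OK OL : EuclideanSpace ℝ (Fin d)) (rK rL : ℝ) (hrK : 0 < rK) (hrL : 0 < rL)
    (K L : Set (EuclideanSpace ℝ (Fin d)))
    (hK : K = closedBall OK rK) (hL : L = closedBall OL rL)
    (hKr : K ⊆ ball 0 r) (hLr : L ⊆ ball 0 r)
    (z : EuclideanSpace ℝ (Fin d)) (hz : ‖z‖ = r)
    (hline : Collinear ℝ ({z, OK, OL} : Set (EuclideanSpace ℝ (Fin d))))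
    (hrad : rL < rK) (hdist : dist z OK ≤ dist z OL) :
    sphProj r L z ⊂ sphProj r K z ∧
      ¬ ∃ φ : EuclideanSpace ℝ (Fin d) ≃ₗᵢ[ℝ] EuclideanSpace ℝ (Fin d),
          φ '' sphProj r K z = sphProj r L z := by
  classical
  -- z is not in K nor in L
  have hzball : z ∉ ball (0:EuclideanSpace ℝ (Fin d)) r := by
    intro hmem
    rw [mem_ball_zero_iff, hz] at hmem
    exact lt_irrefl r hmem
  have hzK : z ∉ K := fun h => hzball (hKr h)
  have hzL : z ∉ L := fun h => hzball (hLr h)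
  have hOKr : ‖OK‖ < r := by
    have : OK ∈ ball (0:EuclideanSpace ℝ (Fin d)) r := hKr (by rw [hK]; exact mem_closedBall_self hrK.le)
    simpa [mem_ball_zero_iff] using this
  have hOLr : ‖OL‖ < r := by
    have : OL ∈ ball (0:EuclideanSpace ℝ (Fin d)) r := hLr (by rw [hL]; exact mem_closedBall_self hrL.le)
    simpa [mem_ball_zero_iff] using this
  set w : EuclideanSpace ℝ (Fin d) := OK - z with hwdef
  have hOKzw : OK = z + w := by rw [hwdef]; abel
  have hw0 : w ≠ 0 := by
    intro h
    have : OK = z := by rw [hwdef, sub_eq_zero] at h; exact h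
    rw [this] at hOKr; linarith [hz ▸ hOKr]
  set h : ℝ := ‖w‖ with hhdef
  have hh0 : 0 < h := norm_pos_iff.mpr hw0
  have hdzOK : dist z OK = h := by rw [dist_eq_norm, ← norm_neg, hhdef, hwdef]; congr 1; abel
  have hrKh : rK < h := by
    have : ¬ dist z OK ≤ rK := by
      intro hle
      exact hzK (by rw [hK]; exact mem_closedBall.mpr hle)
    rw [hdzOK] at this; linarith
  -- collinearity: OL - z = c • w with c ≥ 1
  obtain ⟨v, hv⟩ := (collinear_iff_of_mem
    (show z ∈ ({z, OK, OL} : Set (EuclideanSpace ℝ (Fin d))) from mem_insert _ _)).mp hline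
  obtain ⟨t1, ht1⟩ := hv OK (by simp)
  obtain ⟨t2, ht2⟩ := hv OL (by simp)
  simp only [vadd_eq_add] at ht1 ht2
  have hwt1 : w = t1 • v := by rw [hwdef, ht1]; abel
  have ht1ne : t1 ≠ 0 := by
    intro hc; apply hw0; rw [hwt1, hc, zero_smul]
  set c : ℝ := t2 / t1 with hcdef
  have hOLzw : OL = z + c • w := by
    rw [ht2, hwt1, smul_smul, hcdef, div_mul_cancel₀ _ ht1ne]; abel
  have hzw : ⟪z, w⟫ < 0 := by
    have h1 : ⟪z, w⟫ = ⟪z, OK⟫ - r ^ 2 := by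
      rw [hwdef, inner_sub_right, real_inner_self_eq_norm_sq, hz]
    have h2 : ⟪z, OK⟫ ≤ ‖z‖ * ‖OK‖ := real_inner_le_norm z OK
    rw [hz] at h2
    nlinarith only [h1, h2, hOKr, hr]
  have hOLsq : ‖OL‖ ^ 2 = r ^ 2 + 2 * c * ⟪z, w⟫ + c ^ 2 * h ^ 2 := by
    rw [hOLzw, aux_norm_add_smul, hz, ← hhdef]
  have hc0 : 0 < c := by
    rcases lt_or_ge 0 c with h' | h'
    · exact h'
    · exfalso
      have h1 : ‖OL‖ ^ 2 < r ^ 2 := by nlinarith only [hOLr, norm_nonneg OL]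
      nlinarith only [h1, hOLsq, mul_nonneg (neg_nonneg.mpr h') (neg_nonneg.mpr hzw.le),
        mul_nonneg (sq_nonneg c) (sq_nonneg h)]
  have hc1 : 1 ≤ c := by
    have hdl : dist z OL = c * h := by
      rw [dist_eq_norm, hOLzw]
      have : z - (z + c • w) = -(c • w) := by abel
      rw [this, norm_neg, norm_smul, Real.norm_eq_abs, abs_of_pos hc0, hhdef]
    rw [hdzOK, hdl] at hdist
    have := (mul_le_mul_iff_of_pos_right hh0).mp (by linarith : 1 * h ≤ c * h)
    linarith
  -- Part 1: sphProj r L z ⊆ sphProj r K z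
  have hsub : sphProj r L z ⊆ sphProj r K z := by
    rintro x ⟨hxr, p, hpseg, hpL⟩
    rw [segment_eq_image'] at hpseg
    obtain ⟨θ, hθ, rfl⟩ := hpseg
    obtain ⟨hθ0, hθ1⟩ := hθ
    have hcinv0 : 0 < c⁻¹ := inv_pos.mpr hc0
    have hcinv1 : c⁻¹ ≤ 1 := by
      rw [inv_le_one_iff₀]; right; exact hc1
    refine ⟨hxr, x + (1 - c⁻¹ * (1 - θ)) • (z - x), ?_, ?_⟩
    · rw [segment_eq_image']
      have hb1 : 0 ≤ c⁻¹ * (1 - θ) := mul_nonneg hcinv0.le (by linarith)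
      have hb2 : c⁻¹ * (1 - θ) ≤ 1 := by
        calc c⁻¹ * (1 - θ) ≤ 1 * (1 - θ) := by
              apply mul_le_mul_of_nonneg_right hcinv1 (by linarith)
          _ ≤ 1 := by linarith
      exact ⟨1 - c⁻¹ * (1 - θ), ⟨by linarith, by linarith⟩, rfl⟩
    · rw [hK, mem_closedBall, dist_eq_norm]
      have hpOL : ‖x + θ • (z - x) - OL‖ ≤ rL := by
        rw [hL, mem_closedBall, dist_eq_norm] at hpL; exact hpL
      have key : x + (1 - c⁻¹ * (1 - θ)) • (z - x) - OK
          = c⁻¹ • (x + θ • (z - x) - OL) := by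
        rw [hOKzw, hOLzw]
        exact aux_vid1 x z w θ c hc0.ne'
      rw [key, norm_smul, Real.norm_eq_abs, abs_of_pos hcinv0]
      calc c⁻¹ * ‖x + θ • (z - x) - OL‖ ≤ c⁻¹ * rL := by
            exact mul_le_mul_of_nonneg_left hpOL hcinv0.le
        _ ≤ 1 * rL := mul_le_mul_of_nonneg_right hcinv1 hrL.le
        _ ≤ rK := by linarith
  -- orthogonal unit vector e
  have hdim : Module.finrank ℝ (EuclideanSpace ℝ (Fin d)) = d := finrank_euclideanSpace_fin
  obtain ⟨e0, he0mem, he0⟩ : ∃ e0 ∈ (ℝ ∙ w)ᗮ, e0 ≠ 0 := by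
    by_contra hcon
    push_neg at hcon
    have hbot : (ℝ ∙ w)ᗮ = ⊥ := by
      rw [Submodule.eq_bot_iff]; exact fun y hy => by
        by_contra hne; exact hne (hcon y hy)
    have htop : (ℝ ∙ w) = ⊤ := by
      rwa [Submodule.orthogonal_eq_bot_iff] at hbot
    have h1 : Module.finrank ℝ (ℝ ∙ w) = d := by
      rw [htop, finrank_top, hdim]
    have h2 : Module.finrank ℝ (ℝ ∙ w) = 1 := finrank_span_singleton hw0
    omega
  set e : EuclideanSpace ℝ (Fin d) := ‖e0‖⁻¹ • e0 with hedef
  have he1 : ‖e‖ = 1 := norm_smul_inv_norm he0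
  have hwe : ⟪w, e⟫ = 0 := by
    have := (Submodule.mem_orthogonal _ _).mp he0mem w (Submodule.mem_span_singleton_self w)
    rw [hedef, real_inner_smul_right, this, mul_zero]
  -- construction of the witness point x₀ ∈ K_z \ L_z
  set a : ℝ := Real.sqrt (h ^ 2 - rK ^ 2) with hadef
  have ha2 : a ^ 2 = h ^ 2 - rK ^ 2 := Real.sq_sqrt (by nlinarith only [hrKh, hrK])
  have ha0 : 0 < a := Real.sqrt_pos.mpr (by nlinarith only [hrKh, hrK])
  set u : EuclideanSpace ℝ (Fin d) := (a / h ^ 2) • w + (rK / h) • e with hudef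
  have hww : ⟪w, w⟫ = h ^ 2 := by rw [real_inner_self_eq_norm_sq, hhdef]
  have hew : ⟪e, w⟫ = 0 := by rw [real_inner_comm]; exact hwe
  have huw : ⟪u, w⟫ = a := by
    rw [hudef]; exact aux_inner_unit hh0 hhdef.symm hew
  have hnu : ‖u‖ = 1 := by
    rw [hudef]; exact aux_unit_norm hh0 hhdef.symm he1 hwe ha2
  set b : ℝ := ⟪z, u⟫ with hbdef
  have hzu : ⟪z, u⟫ = b := rfl
  -- norm expansion helper
  have expand : ∀ t : ℝ, ‖z + t • u‖ ^ 2 = r ^ 2 + 2 * t * b + t ^ 2 := by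
    intro t
    rw [aux_norm_add_smul, hz, hnu, hzu]
    ring
  set p : EuclideanSpace ℝ (Fin d) := z + a • u with hpdef
  have hpK : p ∈ K := by
    rw [hK, mem_closedBall, dist_eq_norm]
    have hpOK : p - OK = a • u - w := by rw [hpdef, hOKzw]; abel
    have : ‖a • u - w‖ ^ 2 = rK ^ 2 := by
      have hw1 : a • u - w = a • u - (1:ℝ) • w := by rw [one_smul]
      rw [hw1, aux_norm_smul_sub_smul, hnu, huw, ← hhdef]
      nlinarith only [ha2]
    rw [hpOK]
    exact le_of_eq ((pow_left_inj₀ (norm_nonneg _) hrK.le two_ne_zero).mp this)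
  have hpball : ‖p‖ < r := by
    have := hKr hpK
    simpa [mem_ball_zero_iff] using this
  have hab : a < -2 * b := by
    have h1 : ‖p‖ ^ 2 < r ^ 2 := by nlinarith only [hpball, norm_nonneg p]
    rw [hpdef, expand a] at h1
    nlinarith only [h1, ha0]
  set t0 : ℝ := -2 * b with ht0def
  have ht00 : 0 < t0 := lt_trans ha0 hab
  set x0 : EuclideanSpace ℝ (Fin d) := z + t0 • u with hx0def
  have hx0r : ‖x0‖ = r := by
    have : ‖x0‖ ^ 2 = r ^ 2 := by
      rw [hx0def, expand t0, ht0def]; ring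
    exact (pow_left_inj₀ (norm_nonneg _) hr.le two_ne_zero).mp (by rw [this])
  have hx0K : x0 ∈ sphProj r K z := by
    refine ⟨hx0r, p, ?_, hpK⟩
    rw [segment_eq_image']
    refine ⟨1 - a / t0, ⟨?_, ?_⟩, ?_⟩
    · have : a / t0 < 1 := (div_lt_one ht00).mpr (by linarith)
      linarith
    · have : 0 < a / t0 := div_pos ha0 ht00
      linarith
    · rw [hx0def, hpdef]
      exact aux_vid2 z u t0 a ht00.ne'
  have hx0L : x0 ∉ sphProj r L z := by
    rintro ⟨-, q, hqseg, hqL⟩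
    rw [segment_eq_image'] at hqseg
    obtain ⟨θ, hθ, rfl⟩ := hqseg
    have hqform : x0 + θ • (z - x0) = z + ((1 - θ) * t0) • u := by
      rw [hx0def]; exact aux_vid3 z u t0 θ
    set t : ℝ := (1 - θ) * t0 with htdef
    have hqOL : ‖x0 + θ • (z - x0) - OL‖ ≤ rL := by
      rw [hL, mem_closedBall, dist_eq_norm] at hqL; exact hqL
    have hdiff : x0 + θ • (z - x0) - OL = t • u - c • w := by
      rw [hqform, hOLzw]; abel
    have hval : ‖t • u - c • w‖ ^ 2 = (t - c * a) ^ 2 + c ^ 2 * rK ^ 2 := by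
      rw [aux_norm_smul_sub_smul, hnu, huw, ← hhdef]
      nlinarith only [ha2]
    rw [hdiff] at hqOL
    nlinarith only [sq_nonneg (t - c * a), norm_nonneg (t • u - c • w), hqOL, hval,
      hrad, hrK, hrL,
      mul_le_mul_of_nonneg_right (by nlinarith only [hc1] : (1:ℝ) ≤ c ^ 2) (sq_nonneg rK)]
  -- Part 3: strictness
  have hss : sphProj r L z ⊂ sphProj r K z := by
    rw [ssubset_iff_subset_ne]
    refine ⟨hsub, fun hEq => hx0L (hEq ▸ hx0K)⟩
  refine ⟨hss, ?_⟩
  -- Part 4: compactness of K_z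
  have hcompK : IsCompact (sphProj r K z) := by
    have hbdd : Bornology.IsBounded (sphProj r K z) := by
      apply (isBounded_sphere (x := (0:EuclideanSpace ℝ (Fin d))) (r := r)).subset
      intro x hx
      simpa [mem_sphere_zero_iff_norm] using hx.1
    have hcl : IsClosed (sphProj r K z) := by
      apply IsSeqClosed.isClosed
      intro f x hfm hfx
      have hxr : ‖x‖ = r := by
        have h1 : Filter.Tendsto (fun n => ‖f n‖) Filter.atTop (nhds ‖x‖) := hfx.norm
        have h2 : (fun n => ‖f n‖) = fun _ => r := funext fun n => (hfm n).1
        rw [h2] at h1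
        exact (tendsto_nhds_unique tendsto_const_nhds h1).symm
      have hsel : ∀ n, ∃ θ : ℝ, θ ∈ Icc (0:ℝ) 1 ∧ f n + θ • (z - f n) ∈ K := by
        intro n
        obtain ⟨q, hq1, hq2⟩ := (hfm n).2
        rw [segment_eq_image'] at hq1
        obtain ⟨θ, hθ, rfl⟩ := hq1
        exact ⟨θ, hθ, hq2⟩
      choose θ hθI hθK using hsel
      obtain ⟨t, htI, ψ, hψ, hconv⟩ :=
        (isCompact_Icc (a := (0:ℝ)) (b := 1)).tendsto_subseq hθI
      refine ⟨hxr, x + t • (z - x), ?_, ?_⟩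
      · rw [segment_eq_image']; exact ⟨t, htI, rfl⟩
      · have hKclosed : IsClosed K := by rw [hK]; exact isClosed_closedBall
        have hf' : Filter.Tendsto (f ∘ ψ) Filter.atTop (nhds x) :=
          hfx.comp hψ.tendsto_atTop
        have hlim : Filter.Tendsto (fun k => f (ψ k) + θ (ψ k) • (z - f (ψ k)))
            Filter.atTop (nhds (x + t • (z - x))) := by
          exact Filter.Tendsto.add hf' (Filter.Tendsto.smul hconv
            (tendsto_const_nhds.sub hf'))
        exact hKclosed.mem_of_tendsto hlim
          (Filter.Eventually.of_forall fun k => hθK (ψ k))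
    exact isCompact_of_isClosed_isBounded hcl hbdd
  rintro ⟨φ, hφ⟩
  have himg : φ '' sphProj r K z ⊆ sphProj r K z := by
    rw [hφ]; exact hsub
  have heq : φ '' sphProj r K z = sphProj r K z :=
    isometry_image_self_of_compact hcompK φ.isometry himg
  have : sphProj r L z = sphProj r K z := by rw [← hφ, heq]
  exact hx0L (this ▸ hx0K)
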